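/- For n ≥ 2 and 1 ≤ k ≤ n-1, let x_1 = k-1 and x_2 = ... = x_n = -1. Then every subset of {1,...,n} of size greater than k has negative sum, and the number of subsets with nonnegative sum equals C(n-1,k-1) + C(n-1,k-2) + ... + C(n-1,0) + 1. -/

import Mathlib

open scoped Classical

theorem stmt_16 (n k : ℕ) (hn : 2 ≤ n) (hk1 : 1 ≤ k) (hk2 : k ≤ n - 1)
    (x : Fin n → ℝ)
    (h0 : ∀ i : Fin n, (i : ℕ) = 0 → x i = (k : ℝ) - 1)
    (h1 : ∀ i : Fin n, 1 ≤ (i : ℕ) → x i = -1) :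
    (∀ S : Finset (Fin n), k < S.card → ∑ i ∈ S, x i < 0) ∧
      (Finset.univ.filter (fun S : Finset (Fin n) => 0 ≤ ∑ i ∈ S, x i)).card =
        (∑ i ∈ Finset.range k, (n - 1).choose i) + 1 := by
  have hn0 : 0 < n := by omega
  set i0 : Fin n := ⟨0, hn0⟩ with hi0
  have hsum : ∀ S : Finset (Fin n),
      ∑ i ∈ S, x i = (if i0 ∈ S then (k : ℝ) else 0) - S.card := by
    intro S
    by_cases h : i0 ∈ S
    · have h1' : ∀ i ∈ S.erase i0, x i = -1 := by
        intro i hi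
        apply h1
        have hne := Finset.ne_of_mem_erase hi
        have : (i : ℕ) ≠ 0 := fun h' => hne (Fin.ext h')
        omega
      have hS1 : 1 ≤ S.card := Finset.card_pos.mpr ⟨i0, h⟩
      rw [if_pos h, ← Finset.insert_erase h,
        Finset.sum_insert (Finset.notMem_erase _ _), h0 i0 rfl,
        Finset.sum_congr rfl h1', Finset.sum_const,
        Finset.card_insert_of_notMem (Finset.notMem_erase _ _),
        Finset.card_erase_of_mem h, nsmul_eq_mul]
      push_cast [Nat.cast_sub hS1]
      ring
    · have h1' : ∀ i ∈ S, x i = -1 := by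
        intro i hi
        apply h1
        have hne : i ≠ i0 := fun h' => h (h' ▸ hi)
        have : (i : ℕ) ≠ 0 := fun h' => hne (Fin.ext h')
        omega
      rw [if_neg h, Finset.sum_congr rfl h1', Finset.sum_const, nsmul_eq_mul]
      ring
  constructor
  · intro S hS
    rw [hsum S]
    have hc : (k : ℝ) < S.card := by exact_mod_cast hS
    by_cases h : i0 ∈ S
    · rw [if_pos h]; linarith
    · rw [if_neg h]
      have : (0:ℝ) < S.card := by exact_mod_cast Nat.lt_of_le_of_lt (Nat.zero_le k) hS
      linarith
  · have hF : (Finset.univ.filter (fun S : Finset (Fin n) => 0 ≤ ∑ i ∈ S, x i))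
        = insert ∅ (Finset.univ.filter (fun S : Finset (Fin n) => i0 ∈ S ∧ S.card ≤ k)) := by
      ext S
      simp only [Finset.mem_filter, Finset.mem_univ, true_and, Finset.mem_insert]
      rw [hsum S]
      constructor
      · intro h
        by_cases hi : i0 ∈ S
        · right
          refine ⟨hi, ?_⟩
          rw [if_pos hi] at h
          have : (S.card : ℝ) ≤ k := by linarith
          exact_mod_cast this
        · left
          rw [if_neg hi] at h
          have h2 : (S.card : ℝ) ≤ 0 := by linarith
          have h3 : S.card = 0 := by exact_mod_cast le_antisymm h2 (by positivity)
          exact Finset.card_eq_zero.mp h3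
      · rintro (rfl | ⟨hi, hc⟩)
        · simp
        · rw [if_pos hi]
          have : (S.card : ℝ) ≤ k := by exact_mod_cast hc
          linarith
    rw [hF, Finset.card_insert_of_notMem (by simp)]
    congr 1
    have hbij : (Finset.univ.filter (fun S : Finset (Fin n) => i0 ∈ S ∧ S.card ≤ k)).card
        = ((Finset.range k).biUnion
            (fun j => Finset.powersetCard j (Finset.univ.erase i0))).card := by
      apply Finset.card_bij (fun S _ => S.erase i0)
      · intro S hS
        simp only [Finset.mem_filter, Finset.mem_univ, true_and] at hS
        simp only [Finset.mem_biUnion, Finset.mem_range, Finset.mem_powersetCard]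
        have hS1 : 1 ≤ S.card := Finset.card_pos.mpr ⟨i0, hS.1⟩
        refine ⟨(S.erase i0).card, ?_, ?_, rfl⟩
        · rw [Finset.card_erase_of_mem hS.1]; omega
        · intro i hi
          simp only [Finset.mem_erase] at hi ⊢
          exact ⟨hi.1, Finset.mem_univ i⟩
      · intro S hS T hT h
        simp only [Finset.mem_filter, Finset.mem_univ, true_and] at hS hT
        have := congrArg (insert i0) h
        rwa [Finset.insert_erase hS.1, Finset.insert_erase hT.1] at this
      · intro T hT
        simp only [Finset.mem_biUnion, Finset.mem_range, Finset.mem_powersetCard] at hT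
        obtain ⟨j, hj, hsub, hcard⟩ := hT
        have hi0T : i0 ∉ T := fun h => (Finset.mem_erase.mp (hsub h)).1 rfl
        refine ⟨insert i0 T, ?_, Finset.erase_insert hi0T⟩
        simp only [Finset.mem_filter, Finset.mem_univ, true_and]
        refine ⟨Finset.mem_insert_self _ _, ?_⟩
        rw [Finset.card_insert_of_notMem hi0T, hcard]
        omega
    rw [hbij, Finset.card_biUnion]
    · have hcarde : (Finset.univ.erase i0).card = n - 1 := by
        rw [Finset.card_erase_of_mem (Finset.mem_univ _), Finset.card_univ, Fintype.card_fin]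
      refine Finset.sum_congr rfl fun j _ => ?_
      rw [Finset.card_powersetCard, hcarde]
    · intro a ha b hb hab
      apply Finset.disjoint_left.mpr
      intro T hTa hTb
      rw [Finset.mem_powersetCard] at hTa hTb
      exact hab (hTa.2 ▸ hTb.2.symm ▸ rfl)
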